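/- Let n ≥ 4 be even and let a = (x₁,…,xₙ) ∈ ℝ^{2n}, xₖ = (cos θₖ, sin θₖ), θₖ = 2πk/n, be the regular n-gon configuration with all masses equal to 1. With l = n/2 and θ_{kl} = 2πkl/n = πk, set P_{n/2} = Σ_{j=1}^{n−1} (1 − cos θ_{j(n/2)} cos θⱼ)/(2 d_{nj}³) and Q_{n/2} = Σ_{j=1}^{n−1} (cos θⱼ − cos θ_{j(n/2)})/(2 d_{nj}³), where d_{nj} = 2 sin(πj/n). Let v(n/2) ∈ ℝ^{2n} have k-th planar component cos(πk)·(cos θₖ, sin θₖ). Then the vector w(n/2) with k-th planar component sin(πk)·(cos θₖ, sin θₖ) is zero, and D²U(a) v(n/2) = (P_{n/2} − 3Q_{n/2}) v(n/2) and D²U(a) 𝕁ₙ v(n/2) = (P_{n/2} + 3Q_{n/2}) 𝕁ₙ v(n/2). -/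

import Mathlib

open Real Matrix

noncomputable section

/-- The Newtonian `n`-body potential. -/
def pot {n : ℕ} (m : Fin n → ℝ) (q : (Fin n × Fin 2) → ℝ) : ℝ :=
  ∑ i : Fin n, ∑ j : Fin n, if i < j then
    m i * m j / Real.sqrt ((q (i,0) - q (j,0))^2 + (q (i,1) - q (j,1))^2)
  else 0

/-- Hessian matrix `D²f(a)`. -/
def phess {n : ℕ} (f : ((Fin n × Fin 2) → ℝ) → ℝ) (a : (Fin n × Fin 2) → ℝ) :
    Matrix (Fin n × Fin 2) (Fin n × Fin 2) ℝ :=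
  Matrix.of fun p q => fderiv ℝ (fun x => fderiv ℝ f x (Pi.single q 1)) a (Pi.single p 1)

def J2 : Matrix (Fin 2) (Fin 2) ℝ := !![0, -1; 1, 0]

/-- `𝕁ₙ = diag(J₂,…,J₂)`. -/
def Jmat (n : ℕ) : Matrix (Fin n × Fin 2) (Fin n × Fin 2) ℝ :=
  Matrix.of fun p q => if p.1 = q.1 then J2 p.2 q.2 else 0

/-- The regular `n`-gon configuration. -/
def ngon (n : ℕ) : (Fin n × Fin 2) → ℝ := fun p =>
  if p.2 = 0 then Real.cos (2 * π * (p.1.val + 1) / n)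
  else Real.sin (2 * π * (p.1.val + 1) / n)

/-- `v(l)`: `k`-th planar component `cos θ_{kl} · (cos θₖ, sin θₖ)`, `θ_{kl} = 2πkl/n`. -/
def vvec (n l : ℕ) : (Fin n × Fin 2) → ℝ := fun p =>
  Real.cos (2 * π * (p.1.val + 1) * l / n) *
    (if p.2 = 0 then Real.cos (2 * π * (p.1.val + 1) / n)
     else Real.sin (2 * π * (p.1.val + 1) / n))

/-- `w(l)`: `k`-th planar component `sin θ_{kl} · (cos θₖ, sin θₖ)`. -/
def wvec (n l : ℕ) : (Fin n × Fin 2) → ℝ := fun p =>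
  Real.sin (2 * π * (p.1.val + 1) * l / n) *
    (if p.2 = 0 then Real.cos (2 * π * (p.1.val + 1) / n)
     else Real.sin (2 * π * (p.1.val + 1) / n))

/-- `d_{nj} = 2 sin(πj/n)`. -/
def dnj (n j : ℕ) : ℝ := 2 * Real.sin (π * j / n)

/-- `P_l = ∑_{j=1}^{n-1} (1 - cos θ_{jl} cos θⱼ)/(2 d_{nj}³)`. -/
def Pl (n l : ℕ) : ℝ :=
  ∑ j ∈ Finset.Icc 1 (n-1),
    (1 - Real.cos (2 * π * j * l / n) * Real.cos (2 * π * j / n)) / (2 * (dnj n j)^3)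

/-- `S_l = ∑_{j=1}^{n-1} sin θ_{jl} sin θⱼ/(2 d_{nj}³)`. -/
def Sl (n l : ℕ) : ℝ :=
  ∑ j ∈ Finset.Icc 1 (n-1),
    Real.sin (2 * π * j * l / n) * Real.sin (2 * π * j / n) / (2 * (dnj n j)^3)

/-- `Q_l = ∑_{j=1}^{n-1} (cos θⱼ - cos θ_{jl})/(2 d_{nj}³)`. -/
def Ql (n l : ℕ) : ℝ :=
  ∑ j ∈ Finset.Icc 1 (n-1),
    (Real.cos (2 * π * j / n) - Real.cos (2 * π * j * l / n)) / (2 * (dnj n j)^3)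

namespace NG


variable {n : ℕ}

def sfun (n : ℕ) (i j : Fin n) (x : (Fin n × Fin 2) → ℝ) : ℝ :=
  (x (i,0) - x (j,0))^2 + (x (i,1) - x (j,1))^2

def prj (n : ℕ) (p : Fin n × Fin 2) : ((Fin n × Fin 2) → ℝ) →L[ℝ] ℝ :=
  ContinuousLinearMap.proj p

def Ds (n : ℕ) (i j : Fin n) (x : (Fin n × Fin 2) → ℝ) : ((Fin n × Fin 2) → ℝ) →L[ℝ] ℝ :=
  (2*(x (i,0)-x (j,0))) • (prj n (i,0) - prj n (j,0))
    + (2*(x (i,1)-x (j,1))) • (prj n (i,1) - prj n (j,1))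

lemma sfun_nonneg (i j : Fin n) (x) : 0 ≤ sfun n i j x := by unfold sfun; positivity

lemma hasFDerivAt_coord (p : Fin n × Fin 2) (x : (Fin n × Fin 2) → ℝ) :
    HasFDerivAt (fun y : (Fin n × Fin 2) → ℝ => y p) (prj n p) x :=
  (prj n p).hasFDerivAt

lemma hasFDerivAt_sfun (i j : Fin n) (x) :
    HasFDerivAt (sfun n i j) (Ds n i j x) x := by
  have h0 : HasFDerivAt (fun y : (Fin n × Fin 2) → ℝ => y (i,0) - y (j,0))
      (prj n (i,0) - prj n (j,0)) x := (hasFDerivAt_coord _ x).sub (hasFDerivAt_coord _ x)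
  have h1 : HasFDerivAt (fun y : (Fin n × Fin 2) → ℝ => y (i,1) - y (j,1))
      (prj n (i,1) - prj n (j,1)) x := (hasFDerivAt_coord _ x).sub (hasFDerivAt_coord _ x)
  have := (h0.mul h0).add (h1.mul h1)
  refine (this.congr_fderiv ?_).congr_of_eventuallyEq (Filter.Eventually.of_forall fun y => ?_)
  · unfold Ds; module
  · simp [sfun]; ring

lemma hasFDerivAt_invsqrt {i j : Fin n} {x} (h : sfun n i j x ≠ 0) :
    HasFDerivAt (fun y => (Real.sqrt (sfun n i j y))⁻¹)
      ((-(1/(2 * sfun n i j x * Real.sqrt (sfun n i j x)))) • Ds n i j x) x := by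
  have hs : 0 < sfun n i j x := (sfun_nonneg i j x).lt_of_ne (Ne.symm h)
  have h1 : HasDerivAt (fun y => (Real.sqrt y)⁻¹)
      (-(1/(2 * sfun n i j x * Real.sqrt (sfun n i j x)))) (sfun n i j x) := by
    have := (Real.hasDerivAt_sqrt h).inv (by positivity)
    refine this.congr_deriv ?_
    rw [Real.sq_sqrt hs.le]
    field_simp
  exact h1.comp_hasFDerivAt x (hasFDerivAt_sfun i j x)

lemma pot_eq : pot (fun _ : Fin n => (1:ℝ)) =
    fun x => ∑ i : Fin n, ∑ j : Fin n, if i < j then (Real.sqrt (sfun n i j x))⁻¹ else 0 := by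
  funext x
  simp [pot, sfun, one_div]

def D1 (n : ℕ) (x : (Fin n × Fin 2) → ℝ) : ((Fin n × Fin 2) → ℝ) →L[ℝ] ℝ :=
  ∑ i : Fin n, ∑ j : Fin n, if i < j then
    (-(1/(2 * sfun n i j x * Real.sqrt (sfun n i j x)))) • Ds n i j x else 0

lemma hasFDerivAt_pot {x} (hx : ∀ i j : Fin n, i < j → sfun n i j x ≠ 0) :
    HasFDerivAt (pot (fun _ : Fin n => (1:ℝ))) (D1 n x) x := by
  rw [pot_eq]
  apply HasFDerivAt.fun_sum
  intro i _
  apply HasFDerivAt.fun_sum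
  intro j _
  by_cases hij : i < j
  · simp only [if_pos hij]
    exact hasFDerivAt_invsqrt (hx i j hij)
  · simp only [if_neg hij]
    exact hasFDerivAt_const _ _


def eps (i j k : Fin n) : ℝ := if k = i then 1 else if k = j then -1 else 0

lemma prj_single (p q : Fin n × Fin 2) :
    prj n p (Pi.single q 1) = if p = q then 1 else 0 := by
  simp [prj, Pi.single_apply]

lemma Ds_single {i j : Fin n} (hij : i ≠ j) (x) (q : Fin n × Fin 2) :
    Ds n i j x (Pi.single q 1) = 2*(x (i,q.2)-x (j,q.2)) * eps i j q.1 := by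
  obtain ⟨q1, q2⟩ := q
  simp only [Ds, ContinuousLinearMap.add_apply, ContinuousLinearMap.smul_apply,
    ContinuousLinearMap.sub_apply, prj_single, smul_eq_mul]
  have key : ∀ b : Fin 2, ((if ((i,b) : Fin n × Fin 2) = (q1, q2) then (1:ℝ) else 0)
      - if ((j,b) : Fin n × Fin 2) = (q1, q2) then 1 else 0)
      = (if b = q2 then eps i j q1 else 0) := by
    intro b
    by_cases hb : b = q2
    · subst hb
      by_cases h1 : q1 = i
      · subst h1; simp [eps, Prod.ext_iff, Ne.symm hij]
      · by_cases h2 : q1 = j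
        · subst h2; simp [eps, Prod.ext_iff, h1, Ne.symm h1]
        · simp [eps, Prod.ext_iff, Ne.symm h1, Ne.symm h2, h1, h2]
    · simp [Prod.ext_iff, hb, eps, Ne.symm hb]
  rw [key 0, key 1]
  fin_cases q2 <;> simp

def Gfun (n : ℕ) (q : Fin n × Fin 2) (x : (Fin n × Fin 2) → ℝ) : ℝ :=
  ∑ i : Fin n, ∑ j : Fin n, if i < j then
    (-((x (i,q.2) - x (j,q.2)) * eps i j q.1)) * (sfun n i j x * Real.sqrt (sfun n i j x))⁻¹
  else 0

lemma D1_single (x) (q : Fin n × Fin 2) : D1 n x (Pi.single q 1) = Gfun n q x := by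
  simp only [D1, Gfun, ContinuousLinearMap.sum_apply]
  refine Finset.sum_congr rfl fun i _ => ?_
  refine Finset.sum_congr rfl fun j _ => ?_
  by_cases hij : i < j
  · simp only [if_pos hij, ContinuousLinearMap.smul_apply, Ds_single hij.ne x q, smul_eq_mul]
    have hs : (0:ℝ) ≤ sfun n i j x := sfun_nonneg i j x
    rcases eq_or_lt_of_le hs with h | h
    · rw [← h]; simp
    · have hsq : Real.sqrt (sfun n i j x) ≠ 0 := by positivity
      field_simp
  · simp [if_neg hij]


lemma delta_pair {i j : Fin n} (hij : i ≠ j) (b : Fin 2) (p : Fin n × Fin 2) :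
    ((if ((i,b) : Fin n × Fin 2) = p then (1:ℝ) else 0) - if ((j,b) : Fin n × Fin 2) = p then 1 else 0)
      = (if b = p.2 then eps i j p.1 else 0) := by
  obtain ⟨p1, p2⟩ := p
  by_cases hb : b = p2
  · subst hb
    by_cases h1 : p1 = i
    · subst h1; simp [eps, Prod.ext_iff, Ne.symm hij]
    · by_cases h2 : p1 = j
      · subst h2; simp [eps, Prod.ext_iff, h1, Ne.symm h1]
      · simp [eps, Prod.ext_iff, Ne.symm h1, Ne.symm h2, h1, h2]
  · simp [Prod.ext_iff, hb, eps, Ne.symm hb]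

def D2c (n : ℕ) (i j : Fin n) (q : Fin n × Fin 2) (a : (Fin n × Fin 2) → ℝ) :
    ((Fin n × Fin 2) → ℝ) →L[ℝ] ℝ :=
  (-((a (i,q.2) - a (j,q.2)) * eps i j q.1)) •
    ((-(1*Real.sqrt (sfun n i j a) + sfun n i j a * (1/(2*Real.sqrt (sfun n i j a))))
        / (sfun n i j a * Real.sqrt (sfun n i j a))^2) • Ds n i j a)
  + (sfun n i j a * Real.sqrt (sfun n i j a))⁻¹ •
      ((-eps i j q.1) • (prj n (i,q.2) - prj n (j,q.2)))

lemma hasFDerivAt_term {i j : Fin n} {a} (h : sfun n i j a ≠ 0) (q : Fin n × Fin 2) :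
    HasFDerivAt (fun x => (-((x (i,q.2) - x (j,q.2)) * eps i j q.1))
        * (sfun n i j x * Real.sqrt (sfun n i j x))⁻¹)
      (D2c n i j q a) a := by
  have hs : 0 < sfun n i j a := (sfun_nonneg i j a).lt_of_ne (Ne.symm h)
  have hsq : 0 < Real.sqrt (sfun n i j a) := Real.sqrt_pos.2 hs
  have h_lin : HasFDerivAt (fun x : (Fin n × Fin 2) → ℝ => -((x (i,q.2) - x (j,q.2)) * eps i j q.1))
      ((-eps i j q.1) • (prj n (i,q.2) - prj n (j,q.2))) a := by
    have := ((hasFDerivAt_coord (i,q.2) a).sub (hasFDerivAt_coord (j,q.2) a)).const_mul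
      (-eps i j q.1)
    refine this.congr_of_eventuallyEq (Filter.Eventually.of_forall fun y => ?_)
    simp only [Pi.sub_apply]; ring
  have h_inv : HasFDerivAt (fun x => (sfun n i j x * Real.sqrt (sfun n i j x))⁻¹)
      ((-(1*Real.sqrt (sfun n i j a) + sfun n i j a * (1/(2*Real.sqrt (sfun n i j a))))
        / (sfun n i j a * Real.sqrt (sfun n i j a))^2) • Ds n i j a) a := by
    have g : HasDerivAt (fun y : ℝ => y * Real.sqrt y)
        (1 * Real.sqrt (sfun n i j a) + sfun n i j a * (1/(2*Real.sqrt (sfun n i j a))))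
        (sfun n i j a) := (hasDerivAt_id _).mul (Real.hasDerivAt_sqrt h)
    have g2 := g.inv (by positivity)
    exact g2.comp_hasFDerivAt a (hasFDerivAt_sfun i j a)
  exact h_lin.mul h_inv

def D2full (n : ℕ) (q : Fin n × Fin 2) (a : (Fin n × Fin 2) → ℝ) :
    ((Fin n × Fin 2) → ℝ) →L[ℝ] ℝ :=
  ∑ i : Fin n, ∑ j : Fin n, if i < j then D2c n i j q a else 0

lemma hasFDerivAt_Gfun {a} (ha : ∀ i j : Fin n, i < j → sfun n i j a ≠ 0) (q : Fin n × Fin 2) :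
    HasFDerivAt (Gfun n q) (D2full n q a) a := by
  unfold Gfun D2full
  apply HasFDerivAt.fun_sum
  intro i _
  apply HasFDerivAt.fun_sum
  intro j _
  by_cases hij : i < j
  · simp only [if_pos hij]
    exact hasFDerivAt_term (ha i j hij) q
  · simp only [if_neg hij]
    exact hasFDerivAt_const _ _

def hess2 (n : ℕ) (a : (Fin n × Fin 2) → ℝ) (p q : Fin n × Fin 2) : ℝ :=
  ∑ i : Fin n, ∑ j : Fin n, if i < j then
    eps i j p.1 * eps i j q.1 *
      (3 * (a (i,p.2) - a (j,p.2)) * (a (i,q.2) - a (j,q.2))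
          / ((sfun n i j a)^2 * Real.sqrt (sfun n i j a))
        - (if p.2 = q.2 then 1 else 0) / (sfun n i j a * Real.sqrt (sfun n i j a)))
  else 0

lemma D2full_single {a} (ha : ∀ i j : Fin n, i < j → sfun n i j a ≠ 0) (p q : Fin n × Fin 2) :
    D2full n q a (Pi.single p 1) = hess2 n a p q := by
  simp only [D2full, hess2, ContinuousLinearMap.sum_apply]
  refine Finset.sum_congr rfl fun i _ => Finset.sum_congr rfl fun j _ => ?_
  by_cases hij : i < j
  · simp only [if_pos hij]
    have hs : 0 < sfun n i j a := (sfun_nonneg i j a).lt_of_ne (Ne.symm (ha i j hij))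
    have hsq : 0 < Real.sqrt (sfun n i j a) := Real.sqrt_pos.2 hs
    simp only [D2c, ContinuousLinearMap.add_apply, ContinuousLinearMap.smul_apply,
      ContinuousLinearMap.sub_apply, prj_single, Ds_single hij.ne, smul_eq_mul,
      delta_pair hij.ne]
    have hr : Real.sqrt (sfun n i j a) ^ 2 = sfun n i j a := Real.sq_sqrt hs.le
    set r := Real.sqrt (sfun n i j a) with hrdef
    rw [← hr]
    have hrne : r ≠ 0 := hsq.ne'
    by_cases hpq : p.2 = q.2
    · rw [if_pos hpq, if_pos (hpq.symm)]
      field_simp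
      ring
    · rw [if_neg hpq, if_neg (fun hh => hpq (hh.symm))]
      field_simp
      ring
  · simp [if_neg hij]

lemma isOpen_good : IsOpen {x : (Fin n × Fin 2) → ℝ | ∀ i j : Fin n, i < j → sfun n i j x ≠ 0} := by
  have hset : {x : (Fin n × Fin 2) → ℝ | ∀ i j : Fin n, i < j → sfun n i j x ≠ 0}
      = ⋂ i : Fin n, ⋂ j : Fin n, {x | i < j → sfun n i j x ≠ 0} := by
    ext x; simp [Set.mem_iInter]
  rw [hset]
  refine isOpen_iInter_of_finite fun i => isOpen_iInter_of_finite fun j => ?_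
  by_cases hij : i < j
  · have : {x : (Fin n × Fin 2) → ℝ | i < j → sfun n i j x ≠ 0}
        = (sfun n i j) ⁻¹' ({0}ᶜ) := by
      ext x; simp [hij]
    rw [this]
    have hc : Continuous (sfun n i j) := by
      unfold sfun; fun_prop
    exact isOpen_compl_singleton.preimage hc
  · have : {x : (Fin n × Fin 2) → ℝ | i < j → sfun n i j x ≠ 0} = Set.univ := by
      ext x; simp [hij]
    rw [this]; exact isOpen_univ

lemma phess_pot_eq {a} (ha : ∀ i j : Fin n, i < j → sfun n i j a ≠ 0) (p q : Fin n × Fin 2) :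
    phess (pot (fun _ : Fin n => (1:ℝ))) a p q = hess2 n a p q := by
  have hev : (fun x => fderiv ℝ (pot (fun _ : Fin n => (1:ℝ))) x (Pi.single q 1))
      =ᶠ[nhds a] Gfun n q := by
    filter_upwards [isOpen_good.mem_nhds ha] with x hx
    rw [(hasFDerivAt_pot hx).fderiv, D1_single]
  show fderiv ℝ _ a (Pi.single p 1) = _
  rw [hev.fderiv_eq, (hasFDerivAt_Gfun ha q).fderiv, D2full_single ha]


lemma sum_eps {i j : Fin n} (hij : i ≠ j) (f : Fin n → ℝ) :
    ∑ k, eps i j k * f k = f i - f j := by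
  have h : ∀ k : Fin n, eps i j k * f k
      = (if k = i then f i else 0) + (if k = j then -f j else 0) := by
    intro k
    by_cases h1 : k = i
    · subst h1; simp [eps, hij]
    · by_cases h2 : k = j
      · subst h2; simp [eps, h1]
      · simp [eps, h1, h2]
  rw [Finset.sum_congr rfl fun k _ => h k, Finset.sum_add_distrib,
    Finset.sum_ite_eq' _ i, Finset.sum_ite_eq' _ j]
  simp
  ring

lemma sfun_comm (i j : Fin n) (x) : sfun n i j x = sfun n j i x := by
  unfold sfun; ring

def Et (n : ℕ) (a v : (Fin n × Fin 2) → ℝ) (α : Fin 2) (k j : Fin n) : ℝ :=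
  3 * (a (k,α) - a (j,α)) * ((a (k,0) - a (j,0)) * (v (k,0) - v (j,0))
      + (a (k,1) - a (j,1)) * (v (k,1) - v (j,1)))
      / ((sfun n k j a)^2 * Real.sqrt (sfun n k j a))
  - (v (k,α) - v (j,α)) / (sfun n k j a * Real.sqrt (sfun n k j a))

lemma Et_diag (a v : (Fin n × Fin 2) → ℝ) (α : Fin 2) (k : Fin n) : Et n a v α k k = 0 := by
  simp [Et]

lemma Et_antisymm (a v : (Fin n × Fin 2) → ℝ) (α : Fin 2) (i j : Fin n) :
    Et n a v α j i = - Et n a v α i j := by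
  unfold Et
  rw [sfun_comm j i]
  ring

lemma eps_antisymm {i j : Fin n} (hij : i ≠ j) (k : Fin n) : eps j i k = - eps i j k := by
  by_cases h1 : k = i
  · subst h1; simp [eps, hij, Ne.symm hij]
  · by_cases h2 : k = j
    · subst h2; simp [eps, h1]
    · simp [eps, h1, h2]

lemma half_sum (f : Fin n → Fin n → ℝ) (hsymm : ∀ i j : Fin n, i ≠ j → f j i = f i j)
    (hdiag : ∀ i, f i i = 0) :
    2 * (∑ i : Fin n, ∑ j : Fin n, if i < j then f i j else 0) = ∑ i : Fin n, ∑ j : Fin n, f i j := by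
  have h1 : (∑ i : Fin n, ∑ j : Fin n, if i < j then f i j else 0)
      = ∑ i : Fin n, ∑ j : Fin n, if j < i then f i j else 0 := by
    rw [Finset.sum_comm]
    refine Finset.sum_congr rfl fun i _ => Finset.sum_congr rfl fun j _ => ?_
    by_cases h : j < i
    · rw [if_pos h, if_pos h, hsymm i j h.ne']
    · rw [if_neg h, if_neg h]
  rw [two_mul]
  nth_rewrite 2 [h1]
  rw [← Finset.sum_add_distrib]
  refine Finset.sum_congr rfl fun i _ => ?_
  rw [← Finset.sum_add_distrib]
  refine Finset.sum_congr rfl fun j _ => ?_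
  rcases lt_trichotomy i j with h | h | h
  · rw [if_pos h, if_neg (asymm h)]; ring
  · subst h; simp [hdiag]
  · rw [if_neg (asymm h), if_pos h]; ring

lemma step1 (a v : (Fin n × Fin 2) → ℝ) (p : Fin n × Fin 2) {i j : Fin n} (hij : i ≠ j) :
    (∑ q : Fin n × Fin 2, (eps i j p.1 * eps i j q.1 *
      (3 * (a (i,p.2) - a (j,p.2)) * (a (i,q.2) - a (j,q.2))
          / ((sfun n i j a)^2 * Real.sqrt (sfun n i j a))
        - (if p.2 = q.2 then 1 else 0) / (sfun n i j a * Real.sqrt (sfun n i j a)))) * v q)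
      = eps i j p.1 * Et n a v p.2 i j := by
  rw [Fintype.sum_prod_type_right]
  have inner : ∀ q2 : Fin 2, (∑ q1 : Fin n, (eps i j p.1 * eps i j q1 *
      (3 * (a (i,p.2) - a (j,p.2)) * (a (i,q2) - a (j,q2))
          / ((sfun n i j a)^2 * Real.sqrt (sfun n i j a))
        - (if p.2 = q2 then 1 else 0) / (sfun n i j a * Real.sqrt (sfun n i j a)))) * v (q1, q2))
      = (eps i j p.1 * (3 * (a (i,p.2) - a (j,p.2)) * (a (i,q2) - a (j,q2))
          / ((sfun n i j a)^2 * Real.sqrt (sfun n i j a))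
        - (if p.2 = q2 then 1 else 0) / (sfun n i j a * Real.sqrt (sfun n i j a))))
        * (v (i, q2) - v (j, q2)) := by
    intro q2
    rw [show (eps i j p.1 * (3 * (a (i,p.2) - a (j,p.2)) * (a (i,q2) - a (j,q2))
          / ((sfun n i j a)^2 * Real.sqrt (sfun n i j a))
        - (if p.2 = q2 then 1 else 0) / (sfun n i j a * Real.sqrt (sfun n i j a))))
        * (v (i, q2) - v (j, q2))
      = (eps i j p.1 * (3 * (a (i,p.2) - a (j,p.2)) * (a (i,q2) - a (j,q2))
          / ((sfun n i j a)^2 * Real.sqrt (sfun n i j a))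
        - (if p.2 = q2 then 1 else 0) / (sfun n i j a * Real.sqrt (sfun n i j a))))
        * (∑ q1 : Fin n, eps i j q1 * v (q1, q2)) from by rw [sum_eps hij]]
    rw [Finset.mul_sum]
    refine Finset.sum_congr rfl fun q1 _ => ?_
    ring
  rw [Finset.sum_congr rfl fun q2 _ => inner q2, Fin.sum_univ_two]
  rcases show p.2 = 0 ∨ p.2 = 1 from by omega with h2 | h2 <;> rw [h2] <;>
    simp [Et] <;> ring

lemma hess2_mulVec (a v : (Fin n × Fin 2) → ℝ) (p : Fin n × Fin 2) :
    ∑ q : Fin n × Fin 2, hess2 n a p q * v q = ∑ j : Fin n, Et n a v p.2 p.1 j := by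
  have lhs_eq : ∑ q : Fin n × Fin 2, hess2 n a p q * v q
      = ∑ i : Fin n, ∑ j : Fin n, if i < j then eps i j p.1 * Et n a v p.2 i j else 0 := by
    unfold hess2
    calc ∑ q : Fin n × Fin 2, (∑ i : Fin n, ∑ j : Fin n, if i < j then
          eps i j p.1 * eps i j q.1 *
            (3 * (a (i,p.2) - a (j,p.2)) * (a (i,q.2) - a (j,q.2))
                / ((sfun n i j a)^2 * Real.sqrt (sfun n i j a))
              - (if p.2 = q.2 then 1 else 0) / (sfun n i j a * Real.sqrt (sfun n i j a)))
          else 0) * v q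
        = ∑ q : Fin n × Fin 2, ∑ i : Fin n, ∑ j : Fin n, ((if i < j then
          eps i j p.1 * eps i j q.1 *
            (3 * (a (i,p.2) - a (j,p.2)) * (a (i,q.2) - a (j,q.2))
                / ((sfun n i j a)^2 * Real.sqrt (sfun n i j a))
              - (if p.2 = q.2 then 1 else 0) / (sfun n i j a * Real.sqrt (sfun n i j a)))
          else 0) * v q) := by
          refine Finset.sum_congr rfl fun q _ => ?_
          rw [Finset.sum_mul]
          exact Finset.sum_congr rfl fun i _ => by rw [Finset.sum_mul]
      _ = ∑ i : Fin n, ∑ q : Fin n × Fin 2, ∑ j : Fin n, ((if i < j then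
          eps i j p.1 * eps i j q.1 *
            (3 * (a (i,p.2) - a (j,p.2)) * (a (i,q.2) - a (j,q.2))
                / ((sfun n i j a)^2 * Real.sqrt (sfun n i j a))
              - (if p.2 = q.2 then 1 else 0) / (sfun n i j a * Real.sqrt (sfun n i j a)))
          else 0) * v q) := Finset.sum_comm
      _ = ∑ i : Fin n, ∑ j : Fin n, ∑ q : Fin n × Fin 2, ((if i < j then
          eps i j p.1 * eps i j q.1 *
            (3 * (a (i,p.2) - a (j,p.2)) * (a (i,q.2) - a (j,q.2))
                / ((sfun n i j a)^2 * Real.sqrt (sfun n i j a))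
              - (if p.2 = q.2 then 1 else 0) / (sfun n i j a * Real.sqrt (sfun n i j a)))
          else 0) * v q) := Finset.sum_congr rfl fun i _ => Finset.sum_comm
      _ = ∑ i : Fin n, ∑ j : Fin n, if i < j then eps i j p.1 * Et n a v p.2 i j else 0 := by
          refine Finset.sum_congr rfl fun i _ => Finset.sum_congr rfl fun j _ => ?_
          by_cases hij : i < j
          · simp only [if_pos hij]
            exact step1 a v p hij.ne
          · simp [if_neg hij]
  rw [lhs_eq]
  have key := half_sum (fun i j => eps i j p.1 * Et n a v p.2 i j)
    (fun i j hij => by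
      show eps j i p.1 * Et n a v p.2 j i = eps i j p.1 * Et n a v p.2 i j
      rw [eps_antisymm hij, Et_antisymm]; ring)
    (fun i => by simp [Et_diag])
  have key2 : ∑ i : Fin n, ∑ j : Fin n, eps i j p.1 * Et n a v p.2 i j
      = 2 * ∑ j : Fin n, Et n a v p.2 p.1 j := by
    rw [← Finset.sum_erase_add _ _ (Finset.mem_univ p.1)]
    have hA : ∑ j : Fin n, eps p.1 j p.1 * Et n a v p.2 p.1 j = ∑ j : Fin n, Et n a v p.2 p.1 j := by
      refine Finset.sum_congr rfl fun j _ => ?_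
      simp [eps]
    have hB : ∀ i ∈ Finset.univ.erase p.1, ∑ j : Fin n, eps i j p.1 * Et n a v p.2 i j
        = Et n a v p.2 p.1 i := by
      intro i hi
      have hip : i ≠ p.1 := Finset.ne_of_mem_erase hi
      have : ∀ j : Fin n, eps i j p.1 * Et n a v p.2 i j
          = if j = p.1 then (fun j => - Et n a v p.2 i j) j else 0 := by
        intro j
        by_cases hj : j = p.1
        · subst hj
          have he : eps i p.1 p.1 = -1 := by simp [eps, Ne.symm hip]
          rw [he]; norm_num
        · have : eps i j p.1 = 0 := by simp [eps, Ne.symm hip, Ne.symm hj]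
          simp [hj, this]
      rw [Finset.sum_congr rfl fun j _ => this j, Finset.sum_ite_eq' _ p.1]
      simp only [Finset.mem_univ, if_true]
      rw [Et_antisymm a v p.2 p.1 i]
      ring
    rw [hA, Finset.sum_congr rfl hB]
    rw [Finset.sum_erase_eq_sub (Finset.mem_univ p.1)]
    rw [show Et n a v p.2 p.1 p.1 = 0 from Et_diag a v p.2 p.1]
    ring
  have h2 : (2:ℝ) ≠ 0 := two_ne_zero
  have := key.trans key2
  linarith [this]

section Main
variable {n : ℕ} [NeZero n]
open Fin.NatCast

lemma cast_half (heven : 2 ∣ n) : ((n/2 : ℕ) : ℝ) = (n:ℝ)/2 := by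
  obtain ⟨t, rfl⟩ := heven
  rw [Nat.mul_div_cancel_left t (by norm_num)]
  push_cast; ring

lemma half_angle (hn : n ≠ 0) (heven : 2 ∣ n) (r : ℝ) :
    2 * π * r * ((n/2 : ℕ) : ℝ) / (n:ℝ) = π * r := by
  have h : ((n:ℝ)) ≠ 0 := Nat.cast_ne_zero.2 hn
  rw [cast_half heven]; field_simp

lemma wvec_zero (hn : n ≠ 0) (heven : 2 ∣ n) : wvec n (n / 2) = 0 := by
  funext p
  simp only [wvec, Pi.zero_apply]
  have h1 : 2 * π * ((p.1.val:ℝ) + 1) * ((n/2 : ℕ):ℝ) / (n:ℝ) = π * ((p.1.val:ℝ)+1) :=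
    half_angle hn heven _
  rw [h1, show π * ((p.1.val:ℝ)+1) = ((p.1.val+1 : ℕ):ℝ) * π by push_cast; ring,
    Real.sin_nat_mul_pi, zero_mul]

lemma jval (k : Fin n) (m : ℕ) (hm : m < n) :
    ∃ t : ℕ, ((k + (m : Fin n)).val : ℝ) = (k.val : ℝ) + m - (n:ℝ) * t := by
  haveI : NeZero n := ⟨by omega⟩
  refine ⟨(k.val + m) / n, ?_⟩
  have h1 : (k + (m : Fin n)).val = (k.val + m) % n := by
    rw [Fin.add_def]
    simp [Fin.val_cast_of_lt hm]
  have h2 : (k.val + m) % n + n * ((k.val + m)/n) = k.val + m := Nat.mod_add_div _ _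
  have h3 := congrArg (Nat.cast : ℕ → ℝ) h2
  push_cast at h3
  rw [h1]
  push_cast
  linarith

lemma ngon_self (k : Fin n) :
    ngon n (k, 0) = Real.cos (2*π*((k.val:ℝ)+1)/n)
    ∧ ngon n (k, 1) = Real.sin (2*π*((k.val:ℝ)+1)/n) := by
  constructor <;> simp [ngon]

lemma ngon_add (hn : n ≠ 0) (k : Fin n) (m : ℕ) (hm : m < n) :
    ngon n (k + (m : Fin n), 0)
      = Real.cos (2*π*((k.val:ℝ)+1)/n) * Real.cos (2*π*(m:ℝ)/n)
        - Real.sin (2*π*((k.val:ℝ)+1)/n) * Real.sin (2*π*(m:ℝ)/n)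
    ∧ ngon n (k + (m : Fin n), 1)
      = Real.sin (2*π*((k.val:ℝ)+1)/n) * Real.cos (2*π*(m:ℝ)/n)
        + Real.cos (2*π*((k.val:ℝ)+1)/n) * Real.sin (2*π*(m:ℝ)/n) := by
  obtain ⟨t, ht⟩ := jval k m hm
  have hN : (n:ℝ) ≠ 0 := Nat.cast_ne_zero.2 hn
  have hang : 2*π*(((k + (m : Fin n)).val : ℝ)+1)/n
      = (2*π*((k.val:ℝ)+1)/n + 2*π*(m:ℝ)/n) - (t:ℤ)*(2*π) := by
    rw [ht]; push_cast; field_simp; ring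
  constructor
  · have h0 : ngon n (k + (m : Fin n), 0)
        = Real.cos (2*π*(((k + (m : Fin n)).val : ℝ)+1)/n) := by simp [ngon]
    rw [h0, hang, Real.cos_sub_int_mul_two_pi, Real.cos_add]
  · have h1 : ngon n (k + (m : Fin n), 1)
        = Real.sin (2*π*(((k + (m : Fin n)).val : ℝ)+1)/n) := by simp [ngon]
    rw [h1, hang, Real.sin_sub_int_mul_two_pi, Real.sin_add]

lemma vvec_eq (l : ℕ) (p : Fin n × Fin 2) :
    vvec n l p = Real.cos (2*π*((p.1.val:ℝ)+1)*(l:ℝ)/n) * ngon n p := rfl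

lemma sin_nat_pi (r : ℕ) : Real.sin (π*(r:ℝ)) = 0 := by
  rw [mul_comm, Real.sin_nat_mul_pi]

lemma vvec_self (hn : n ≠ 0) (heven : 2 ∣ n) (k : Fin n) (β : Fin 2) :
    vvec n (n/2) (k, β) = Real.cos (π*((k.val:ℝ)+1)) * ngon n (k, β) := by
  rw [vvec_eq, half_angle hn heven ((k.val:ℝ)+1)]

lemma vvec_add (hn : n ≠ 0) (heven : 2 ∣ n) (k : Fin n) (m : ℕ) (hm : m < n) (β : Fin 2) :
    vvec n (n/2) (k + (m : Fin n), β)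
      = (Real.cos (π*((k.val:ℝ)+1)) * Real.cos (π*(m:ℝ))) * ngon n (k + (m : Fin n), β) := by
  rw [vvec_eq, half_angle hn heven]
  congr 1
  obtain ⟨t, ht⟩ := jval k m hm
  obtain ⟨u, hu⟩ := heven
  have h1 : π*(((k + (m:Fin n)).val:ℝ)+1) = (π*((k.val:ℝ)+1) + π*(m:ℝ)) - ((t*u : ℕ):ℤ)*(2*π) := by
    rw [ht]; subst hu; push_cast; ring
  rw [h1, Real.cos_sub_int_mul_two_pi, Real.cos_add,
    show π*((k.val:ℝ)+1) = ((k.val+1 : ℕ):ℝ)*π by push_cast; ring, Real.sin_nat_mul_pi]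
  push_cast
  ring

lemma sfun_add (hn : n ≠ 0) (k : Fin n) (m : ℕ) (hm : m < n) :
    sfun n k (k + (m:Fin n)) (ngon n) = 2 - 2*Real.cos (2*π*(m:ℝ)/n) := by
  obtain ⟨h0, h1⟩ := ngon_add hn k m hm
  obtain ⟨e0, e1⟩ := ngon_self (n := n) k
  unfold sfun
  rw [h0, h1, e0, e1]
  have p1 := Real.sin_sq_add_cos_sq (2*π*((k.val:ℝ)+1)/n)
  have p2 := Real.sin_sq_add_cos_sq (2*π*(m:ℝ)/n)
  nlinarith [p1, p2]

lemma two_sub_eq_sq (x : ℝ) : 2 - 2*Real.cos (2*x) = (2*Real.sin x)^2 := by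
  have h2 : Real.cos (2*x) = 2*Real.cos x^2 - 1 := Real.cos_two_mul x
  have := Real.sin_sq_add_cos_sq x
  nlinarith

lemma sfun_add_sq (hn : n ≠ 0) (k : Fin n) (m : ℕ) (hm : m < n) :
    sfun n k (k + (m:Fin n)) (ngon n) = (2*Real.sin (π*(m:ℝ)/n))^2 := by
  rw [sfun_add hn k m hm, show 2*π*(m:ℝ)/n = 2*(π*(m:ℝ)/n) by ring, two_sub_eq_sq]

lemma sqrt_sfun_add (hn : n ≠ 0) (k : Fin n) (m : ℕ) (hm : m < n) :
    Real.sqrt (sfun n k (k + (m:Fin n)) (ngon n)) = 2*Real.sin (π*(m:ℝ)/n) := by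
  rw [sfun_add_sq hn k m hm]
  have hNpos : (0:ℝ) < n := by exact_mod_cast Nat.pos_of_ne_zero hn
  have hmn : (m:ℝ) ≤ n := by exact_mod_cast hm.le
  have harg1 : 0 ≤ π*(m:ℝ)/n := by positivity
  have harg2 : π*(m:ℝ)/n ≤ π := by
    rw [div_le_iff₀ hNpos]
    nlinarith [Real.pi_pos]
  exact Real.sqrt_sq (mul_nonneg (by norm_num)
    (Real.sin_nonneg_of_nonneg_of_le_pi harg1 harg2))

lemma refl_c (hn : n ≠ 0) {m : ℕ} (hm : m ≤ n) :
    Real.cos (2*π*((n-m:ℕ):ℝ)/n) = Real.cos (2*π*(m:ℝ)/n) := by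
  have hN : (n:ℝ) ≠ 0 := Nat.cast_ne_zero.2 hn
  rw [Nat.cast_sub hm, show 2*π*((n:ℝ)-m)/n = 2*π - 2*π*(m:ℝ)/n by field_simp,
    Real.cos_two_pi_sub]

lemma refl_s (hn : n ≠ 0) {m : ℕ} (hm : m ≤ n) :
    Real.sin (2*π*((n-m:ℕ):ℝ)/n) = -Real.sin (2*π*(m:ℝ)/n) := by
  have hN : (n:ℝ) ≠ 0 := Nat.cast_ne_zero.2 hn
  rw [Nat.cast_sub hm, show 2*π*((n:ℝ)-m)/n = 2*π - 2*π*(m:ℝ)/n by field_simp,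
    Real.sin_sub]
  simp

lemma refl_e (heven : 2 ∣ n) {m : ℕ} (hm : m ≤ n) :
    Real.cos (π*((n-m:ℕ):ℝ)) = Real.cos (π*(m:ℝ)) := by
  obtain ⟨u, hu⟩ := heven
  rw [Nat.cast_sub hm, show π*((n:ℝ)-m) = π*(n:ℝ) - π*(m:ℝ) by ring, hu]
  rw [show π*((2*u : ℕ):ℝ) = ((u:ℤ):ℝ)*(2*π) by push_cast; ring]
  exact Real.cos_int_mul_two_pi_sub _ _

lemma refl_d (hn : n ≠ 0) {m : ℕ} (hm : m ≤ n) :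
    Real.sin (π*((n-m:ℕ):ℝ)/n) = Real.sin (π*(m:ℝ)/n) := by
  have hN : (n:ℝ) ≠ 0 := Nat.cast_ne_zero.2 hn
  rw [Nat.cast_sub hm, show π*((n:ℝ)-m)/n = π - π*(m:ℝ)/n by field_simp,
    Real.sin_pi_sub]

lemma sum_reindex (hn : n ≠ 0) (k : Fin n) (F : Fin n → ℝ) (hF : F k = 0) :
    ∑ j : Fin n, F j = ∑ m ∈ Finset.Icc 1 (n-1), F (k + (m : Fin n)) := by
  haveI : NeZero n := ⟨hn⟩
  have h1 : ∑ j : Fin n, F j = ∑ m : Fin n, F (k + m) := (Equiv.sum_comp (Equiv.addLeft k) F).symm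
  rw [h1, ← Finset.sum_erase (Finset.univ) (a := (0 : Fin n)) (by simpa using hF)]
  refine Finset.sum_nbij' (fun m => (m : Fin n).val) (fun m => ((m : ℕ) : Fin n)) ?_ ?_ ?_ ?_ ?_
  · intro a ha
    have h0 : a ≠ 0 := Finset.ne_of_mem_erase ha
    have : a.val ≠ 0 := fun h => h0 (Fin.ext h)
    simp only [Finset.mem_Icc]
    omega
  · intro a ha
    simp only [Finset.mem_Icc] at ha
    have hlt : a < n := by omega
    refine Finset.mem_erase.2 ⟨?_, Finset.mem_univ _⟩
    intro h
    have h0 : ((a:ℕ) : Fin n) = 0 := h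
    have hval := Fin.val_cast_of_lt (n := n) hlt
    rw [h0] at hval
    simp at hval
    omega
  · intro a _; simp [Fin.cast_val_eq_self]
  · intro a ha
    simp only [Finset.mem_Icc] at ha
    exact Fin.val_cast_of_lt (by omega)
  · intro a _
    rw [Fin.cast_val_eq_self]

lemma sum_reflect (hn : n ≠ 0) (G : ℕ → ℝ) :
    ∑ m ∈ Finset.Icc 1 (n-1), G m = ∑ m ∈ Finset.Icc 1 (n-1), G (n - m) := by
  refine Finset.sum_nbij' (fun m => n - m) (fun m => n - m) ?_ ?_ ?_ ?_ ?_ <;>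
    intro a ha <;> simp only [Finset.mem_Icc] at * <;> try omega
  have : n - (n - a) = a := by omega
  rw [this]

lemma eig_glue (hn : n ≠ 0) (k : Fin n) (F : Fin n → ℝ) (R : ℕ → ℝ) (hF : F k = 0)
    (hpair : ∀ m, 1 ≤ m → m ≤ n - 1 →
      F (k + (m:Fin n)) + F (k + ((n-m : ℕ):Fin n)) = 2 * R m) :
    ∑ j : Fin n, F j = ∑ m ∈ Finset.Icc 1 (n-1), R m := by
  rw [sum_reindex hn k F hF]
  have h1 : ∑ m ∈ Finset.Icc 1 (n-1), F (k + (m : Fin n))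
      = ∑ m ∈ Finset.Icc 1 (n-1), F (k + ((n - m : ℕ) : Fin n)) :=
    sum_reflect hn (fun m => F (k + (m : Fin n)))
  have h2 : 2 * ∑ m ∈ Finset.Icc 1 (n-1), F (k + (m : Fin n))
      = 2 * ∑ m ∈ Finset.Icc 1 (n-1), R m := by
    rw [two_mul]
    nth_rewrite 2 [h1]
    rw [← Finset.sum_add_distrib, Finset.mul_sum]
    refine Finset.sum_congr rfl fun m hm => ?_
    simp only [Finset.mem_Icc] at hm
    exact hpair m hm.1 hm.2
  linarith

lemma ha_ngon (hn : n ≠ 0) : ∀ i j : Fin n, i < j → sfun n i j (ngon n) ≠ 0 := by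
  intro i j hij
  have hN : (0:ℝ) < n := by exact_mod_cast Nat.pos_of_ne_zero hn
  obtain ⟨ei0, ei1⟩ := ngon_self (n:=n) i
  obtain ⟨ej0, ej1⟩ := ngon_self (n:=n) j
  have hexp : sfun n i j (ngon n) = 2 - 2 * Real.cos (2*π*((i.val:ℝ) - j.val)/n) := by
    unfold sfun
    rw [ei0, ei1, ej0, ej1]
    rw [show 2*π*((i.val:ℝ) - j.val)/n = 2*π*((i.val:ℝ)+1)/n - 2*π*((j.val:ℝ)+1)/n by
      field_simp; ring, Real.cos_sub]
    have p1 := Real.sin_sq_add_cos_sq (2*π*((i.val:ℝ)+1)/n)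
    have p2 := Real.sin_sq_add_cos_sq (2*π*((j.val:ℝ)+1)/n)
    nlinarith [p1, p2]
  rw [hexp]
  intro hcontra
  have hcos1 : Real.cos (2*π*((i.val:ℝ) - j.val)/n) = 1 := by linarith
  rw [Real.cos_eq_one_iff] at hcos1
  obtain ⟨t, ht⟩ := hcos1
  have hπ : (0:ℝ) < π := Real.pi_pos
  have hD : ((i.val:ℝ) - j.val) = t * n := by
    have h2 : (2*π) * ((t:ℝ) * n) = (2*π) * ((i.val:ℝ) - j.val) := by
      have hne : (n:ℝ) ≠ 0 := ne_of_gt hN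
      field_simp at ht
      nlinarith [ht]
    have := mul_left_cancel₀ (by positivity : (2*π) ≠ 0) h2
    linarith
  have h1 : ((i.val:ℝ) - j.val) < 0 := by
    have : (i.val:ℝ) < j.val := by exact_mod_cast hij
    linarith
  have h2 : -(n:ℝ) < (i.val:ℝ) - j.val := by
    have := j.isLt
    have : (j.val:ℝ) < n := by exact_mod_cast this
    have : (0:ℝ) ≤ i.val := by positivity
    linarith
  have ht1 : (t:ℝ) < 0 := by nlinarith
  have ht2 : (-1:ℝ) < t := by nlinarith
  have ht1' : t < 0 := by exact_mod_cast ht1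
  have ht2' : (-1:ℤ) < t := by exact_mod_cast ht2
  omega

lemma Jmul (u : (Fin n × Fin 2) → ℝ) (r : Fin n) :
    (Jmat n).mulVec u (r, 0) = -u (r, 1) ∧ (Jmat n).mulVec u (r, 1) = u (r, 0) := by
  have key : ∀ β : Fin 2, (Jmat n).mulVec u (r, β)
      = J2 β 0 * u (r, 0) + J2 β 1 * u (r, 1) := by
    intro β
    show ∑ q : Fin n × Fin 2, Jmat n (r, β) q * u q = _
    simp only [Jmat, Matrix.of_apply]
    rw [Fintype.sum_prod_type_right]
    have inner : ∀ q2 : Fin 2, ∑ q1 : Fin n,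
        (if ((r, β) : Fin n × Fin 2).1 = (q1, q2).1 then J2 β (q1, q2).2 else 0) * u (q1, q2)
        = J2 β q2 * u (r, q2) := by
      intro q2
      have h : ∀ q1 : Fin n, (if ((r, β) : Fin n × Fin 2).1 = (q1, q2).1 then J2 β (q1, q2).2 else 0) * u (q1, q2)
          = if q1 = r then (fun q1 => J2 β q2 * u (q1, q2)) q1 else 0 := by
        intro q1
        rcases eq_or_ne q1 r with h | h
        · subst h; simp
        · simp [h, Ne.symm h]
      rw [Finset.sum_congr rfl fun q1 _ => h q1, Finset.sum_ite_eq' _ r]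
      simp
    rw [Finset.sum_congr rfl fun q2 _ => inner q2, Fin.sum_univ_two]
  constructor
  · rw [key 0]; norm_num [J2]
  · rw [key 1]; norm_num [J2]

lemma PQ_v (hn : n ≠ 0) (heven : 2 ∣ n) :
    Pl n (n/2) - 3 * Ql n (n/2)
      = ∑ m ∈ Finset.Icc 1 (n-1),
          ((1 - Real.cos (π*(m:ℝ)) * Real.cos (2*π*(m:ℝ)/n))
            - 3*(Real.cos (2*π*(m:ℝ)/n) - Real.cos (π*(m:ℝ)))) / (2*(dnj n m)^3) := by
  unfold Pl Ql
  rw [Finset.mul_sum, ← Finset.sum_sub_distrib]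
  refine Finset.sum_congr rfl fun m _ => ?_
  rw [half_angle hn heven (m:ℝ)]
  ring

lemma PQ_w (hn : n ≠ 0) (heven : 2 ∣ n) :
    Pl n (n/2) + 3 * Ql n (n/2)
      = ∑ m ∈ Finset.Icc 1 (n-1),
          ((1 - Real.cos (π*(m:ℝ)) * Real.cos (2*π*(m:ℝ)/n))
            + 3*(Real.cos (2*π*(m:ℝ)/n) - Real.cos (π*(m:ℝ)))) / (2*(dnj n m)^3) := by
  unfold Pl Ql
  rw [Finset.mul_sum, ← Finset.sum_add_distrib]
  refine Finset.sum_congr rfl fun m _ => ?_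
  rw [half_angle hn heven (m:ℝ)]
  ring


set_option maxHeartbeats 1000000 in
lemma core_v0 (C S c s E e d : ℝ) (hCS : S^2+C^2=1) (hcs : s^2+c^2=1)
    (hd : (2*d)^2 = 2-2*c) (hdne : d ≠ 0) :
    (3*(C - (C*c - S*s))*((C - (C*c - S*s))*(E*C - E*e*(C*c - S*s))
        + (S - (S*c + C*s))*(E*S - E*e*(S*c + C*s)))/(((2*d)^2)^2*(2*d))
      - (E*C - E*e*(C*c - S*s))/((2*d)^2*(2*d)))
    + (3*(C - (C*c - S*(-s)))*((C - (C*c - S*(-s)))*(E*C - E*e*(C*c - S*(-s)))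
        + (S - (S*c + C*(-s)))*(E*S - E*e*(S*c + C*(-s))))/(((2*d)^2)^2*(2*d))
      - (E*C - E*e*(C*c - S*(-s)))/((2*d)^2*(2*d)))
    = 2*(((1 - e*c) - 3*(c - e))/(2*(2*d)^3)*(E*C)) := by
  linear_combination (norm := (field_simp; ring))
    ((6*C*E + 6*C*s^2*E*e - 12*C*c*E - 6*C*c*E*e - 6*C*c*s^2*E*e + 6*C*c^2*E
      + 12*C*c^2*E*e - 6*C*c^3*E*e) * hCS
     + (6*C*E*e - 6*C*c*E*e) * hcs
     + (-(3*C*E) - 3*C*E*e + 3*C*c*E + 3*C*c*E*e) * hd) / (2*d)^5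

set_option maxHeartbeats 1000000 in
lemma core_v1 (C S c s E e d : ℝ) (hCS : S^2+C^2=1) (hcs : s^2+c^2=1)
    (hd : (2*d)^2 = 2-2*c) (hdne : d ≠ 0) :
    (3*(S - (S*c + C*s))*((C - (C*c - S*s))*(E*C - E*e*(C*c - S*s))
        + (S - (S*c + C*s))*(E*S - E*e*(S*c + C*s)))/(((2*d)^2)^2*(2*d))
      - (E*S - E*e*(S*c + C*s))/((2*d)^2*(2*d)))
    + (3*(S - (S*c + C*(-s)))*((C - (C*c - S*(-s)))*(E*C - E*e*(C*c - S*(-s)))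
        + (S - (S*c + C*(-s)))*(E*S - E*e*(S*c + C*(-s))))/(((2*d)^2)^2*(2*d))
      - (E*S - E*e*(S*c + C*(-s)))/((2*d)^2*(2*d)))
    = 2*(((1 - e*c) - 3*(c - e))/(2*(2*d)^3)*(E*S)) := by
  linear_combination (norm := (field_simp; ring))
    ((6*S*E + 6*S*s^2*E*e - 12*S*c*E - 6*S*c*E*e - 6*S*c*s^2*E*e + 6*S*c^2*E
      + 12*S*c^2*E*e - 6*S*c^3*E*e) * hCS
     + (6*S*E*e - 6*S*c*E*e) * hcs
     + (-(3*S*E) - 3*S*E*e + 3*S*c*E + 3*S*c*E*e) * hd) / (2*d)^5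

set_option maxHeartbeats 1000000 in
lemma core_w0 (C S c s E e d : ℝ) (hCS : S^2+C^2=1) (hcs : s^2+c^2=1)
    (hd : (2*d)^2 = 2-2*c) (hdne : d ≠ 0) :
    (3*(C - (C*c - S*s))*((C - (C*c - S*s))*(-(E*S) - (-(E*e*(S*c + C*s))))
        + (S - (S*c + C*s))*(E*C - E*e*(C*c - S*s)))/(((2*d)^2)^2*(2*d))
      - (-(E*S) - (-(E*e*(S*c + C*s))))/((2*d)^2*(2*d)))
    + (3*(C - (C*c - S*(-s)))*((C - (C*c - S*(-s)))*(-(E*S) - (-(E*e*(S*c + C*(-s)))))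
        + (S - (S*c + C*(-s)))*(E*C - E*e*(C*c - S*(-s))))/(((2*d)^2)^2*(2*d))
      - (-(E*S) - (-(E*e*(S*c + C*(-s)))))/((2*d)^2*(2*d)))
    = 2*(((1 - e*c) + 3*(c - e))/(2*(2*d)^3)*(-(E*S))) := by
  linear_combination (norm := (field_simp; ring))
    ((-6*S*s^2*E + 6*S*s^2*E*e) * hCS
     + (-6*S*E + 6*S*E*e) * hcs
     + (3*S*E - 3*S*E*e + 3*S*c*E - 3*S*c*E*e) * hd) / (2*d)^5

set_option maxHeartbeats 1000000 in
lemma core_w1 (C S c s E e d : ℝ) (hCS : S^2+C^2=1) (hcs : s^2+c^2=1)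
    (hd : (2*d)^2 = 2-2*c) (hdne : d ≠ 0) :
    (3*(S - (S*c + C*s))*((C - (C*c - S*s))*(-(E*S) - (-(E*e*(S*c + C*s))))
        + (S - (S*c + C*s))*(E*C - E*e*(C*c - S*s)))/(((2*d)^2)^2*(2*d))
      - (E*C - E*e*(C*c - S*s))/((2*d)^2*(2*d)))
    + (3*(S - (S*c + C*(-s)))*((C - (C*c - S*(-s)))*(-(E*S) - (-(E*e*(S*c + C*(-s)))))
        + (S - (S*c + C*(-s)))*(E*C - E*e*(C*c - S*(-s))))/(((2*d)^2)^2*(2*d))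
      - (E*C - E*e*(C*c - S*(-s)))/((2*d)^2*(2*d)))
    = 2*(((1 - e*c) + 3*(c - e))/(2*(2*d)^3)*(E*C)) := by
  linear_combination (norm := (field_simp; ring))
    ((6*C*s^2*E - 6*C*s^2*E*e) * hCS
     + (6*C*E - 6*C*E*e) * hcs
     + (-3*C*E + 3*C*E*e - 3*C*c*E + 3*C*c*E*e) * hd) / (2*d)^5

set_option maxHeartbeats 2000000 in
lemma pair_v (hn4 : 4 ≤ n) (heven : 2 ∣ n) (k : Fin n) (α : Fin 2) (m : ℕ)
    (hm1 : 1 ≤ m) (hm2 : m ≤ n - 1) :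
    Et n (ngon n) (vvec n (n/2)) α k (k + (m : Fin n))
      + Et n (ngon n) (vvec n (n/2)) α k (k + ((n - m : ℕ) : Fin n))
    = 2 * ((((1 - Real.cos (π*(m:ℝ)) * Real.cos (2*π*(m:ℝ)/n))
        - 3*(Real.cos (2*π*(m:ℝ)/n) - Real.cos (π*(m:ℝ)))) / (2*(dnj n m)^3))
        * vvec n (n/2) (k, α)) := by
  have hn : n ≠ 0 := by omega
  have hm : m < n := by omega
  have hm' : n - m < n := by omega
  have hmle : m ≤ n := by omega
  have hN : (0:ℝ) < n := by exact_mod_cast Nat.pos_of_ne_zero hn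
  obtain ⟨g0, g1⟩ := ngon_add hn k m hm
  obtain ⟨g0', g1'⟩ := ngon_add hn k (n-m) hm'
  rw [refl_c hn hmle, refl_s hn hmle] at g0' g1'
  obtain ⟨e0, e1⟩ := ngon_self (n:=n) k
  have hv0 := vvec_add hn heven k m hm 0
  have hv1 := vvec_add hn heven k m hm 1
  have hv0' := vvec_add hn heven k (n-m) hm' 0
  have hv1' := vvec_add hn heven k (n-m) hm' 1
  rw [refl_e heven hmle] at hv0' hv1'
  have hw0 := vvec_self hn heven k 0
  have hw1 := vvec_self hn heven k 1
  have hsf := sfun_add_sq hn k m hm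
  have hsf' := sfun_add_sq hn k (n-m) hm'
  rw [refl_d hn hmle] at hsf'
  have hsq := sqrt_sfun_add hn k m hm
  have hsq' := sqrt_sfun_add hn k (n-m) hm'
  rw [refl_d hn hmle] at hsq'
  have hCS := Real.sin_sq_add_cos_sq (2*π*((k.val:ℝ)+1)/n)
  have hcs := Real.sin_sq_add_cos_sq (2*π*(m:ℝ)/n)
  have hd : (2*Real.sin (π*(m:ℝ)/n))^2 = 2 - 2*Real.cos (2*π*(m:ℝ)/n) := by
    rw [show 2*π*(m:ℝ)/n = 2*(π*(m:ℝ)/n) by ring]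
    exact (two_sub_eq_sq _).symm
  have hdpos : 0 < Real.sin (π*(m:ℝ)/n) := by
    apply Real.sin_pos_of_pos_of_lt_pi
    · have : (0:ℝ) < m := by exact_mod_cast hm1
      positivity
    · rw [div_lt_iff₀ hN]
      have : (m:ℝ) < n := by exact_mod_cast hm
      nlinarith [Real.pi_pos]
  have hdne : Real.sin (π*(m:ℝ)/n) ≠ 0 := ne_of_gt hdpos
  rcases show α = 0 ∨ α = 1 from by omega with rfl | rfl
  · unfold Et dnj
    rw [hsq, hsq', hsf, hsf', hv0, hv1, hv0', hv1', hw0, hw1, g0, g1, g0', g1', e0, e1]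
    linear_combination core_v0 (Real.cos (2*π*((k.val:ℝ)+1)/n)) (Real.sin (2*π*((k.val:ℝ)+1)/n))
      (Real.cos (2*π*(m:ℝ)/n)) (Real.sin (2*π*(m:ℝ)/n)) (Real.cos (π*((k.val:ℝ)+1)))
      (Real.cos (π*(m:ℝ))) (Real.sin (π*(m:ℝ)/n)) hCS hcs hd hdne
  · unfold Et dnj
    rw [hsq, hsq', hsf, hsf', hv0, hv1, hv0', hv1', hw0, hw1, g0, g1, g0', g1', e0, e1]
    linear_combination core_v1 (Real.cos (2*π*((k.val:ℝ)+1)/n)) (Real.sin (2*π*((k.val:ℝ)+1)/n))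
      (Real.cos (2*π*(m:ℝ)/n)) (Real.sin (2*π*(m:ℝ)/n)) (Real.cos (π*((k.val:ℝ)+1)))
      (Real.cos (π*(m:ℝ))) (Real.sin (π*(m:ℝ)/n)) hCS hcs hd hdne


set_option maxHeartbeats 2000000 in
lemma pair_w (hn4 : 4 ≤ n) (heven : 2 ∣ n) (k : Fin n) (α : Fin 2) (m : ℕ)
    (hm1 : 1 ≤ m) (hm2 : m ≤ n - 1) :
    Et n (ngon n) ((Jmat n).mulVec (vvec n (n/2))) α k (k + (m : Fin n))
      + Et n (ngon n) ((Jmat n).mulVec (vvec n (n/2))) α k (k + ((n - m : ℕ) : Fin n))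
    = 2 * ((((1 - Real.cos (π*(m:ℝ)) * Real.cos (2*π*(m:ℝ)/n))
        + 3*(Real.cos (2*π*(m:ℝ)/n) - Real.cos (π*(m:ℝ)))) / (2*(dnj n m)^3))
        * ((Jmat n).mulVec (vvec n (n/2)) (k, α))) := by
  have hn : n ≠ 0 := by omega
  have hm : m < n := by omega
  have hm' : n - m < n := by omega
  have hmle : m ≤ n := by omega
  have hN : (0:ℝ) < n := by exact_mod_cast Nat.pos_of_ne_zero hn
  obtain ⟨g0, g1⟩ := ngon_add hn k m hm
  obtain ⟨g0', g1'⟩ := ngon_add hn k (n-m) hm'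
  rw [refl_c hn hmle, refl_s hn hmle] at g0' g1'
  obtain ⟨e0, e1⟩ := ngon_self (n:=n) k
  have hv0 := vvec_add hn heven k m hm 0
  have hv1 := vvec_add hn heven k m hm 1
  have hv0' := vvec_add hn heven k (n-m) hm' 0
  have hv1' := vvec_add hn heven k (n-m) hm' 1
  rw [refl_e heven hmle] at hv0' hv1'
  have hw0 := vvec_self hn heven k 0
  have hw1 := vvec_self hn heven k 1
  have hsf := sfun_add_sq hn k m hm
  have hsf' := sfun_add_sq hn k (n-m) hm'
  rw [refl_d hn hmle] at hsf'
  have hsq := sqrt_sfun_add hn k m hm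
  have hsq' := sqrt_sfun_add hn k (n-m) hm'
  rw [refl_d hn hmle] at hsq'
  have hCS := Real.sin_sq_add_cos_sq (2*π*((k.val:ℝ)+1)/n)
  have hcs := Real.sin_sq_add_cos_sq (2*π*(m:ℝ)/n)
  have hd : (2*Real.sin (π*(m:ℝ)/n))^2 = 2 - 2*Real.cos (2*π*(m:ℝ)/n) := by
    rw [show 2*π*(m:ℝ)/n = 2*(π*(m:ℝ)/n) by ring]
    exact (two_sub_eq_sq _).symm
  have hdpos : 0 < Real.sin (π*(m:ℝ)/n) := by
    apply Real.sin_pos_of_pos_of_lt_pi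
    · have : (0:ℝ) < m := by exact_mod_cast hm1
      positivity
    · rw [div_lt_iff₀ hN]
      have : (m:ℝ) < n := by exact_mod_cast hm
      nlinarith [Real.pi_pos]
  have hdne : Real.sin (π*(m:ℝ)/n) ≠ 0 := ne_of_gt hdpos
  have hJ0 : ∀ r : Fin n, (Jmat n).mulVec (vvec n (n/2)) (r, 0) = -(vvec n (n/2) (r,1)) :=
    fun r => by rw [(Jmul (vvec n (n/2)) r).1]
  have hJ1 : ∀ r : Fin n, (Jmat n).mulVec (vvec n (n/2)) (r, 1) = vvec n (n/2) (r,0) :=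
    fun r => (Jmul (vvec n (n/2)) r).2
  rcases show α = 0 ∨ α = 1 from by omega with rfl | rfl
  · unfold Et dnj
    rw [hJ0 k, hJ1 k, hJ0 (k + (m : Fin n)), hJ1 (k + (m : Fin n)),
      hJ0 (k + ((n - m : ℕ) : Fin n)), hJ1 (k + ((n - m : ℕ) : Fin n)),
      hsq, hsq', hsf, hsf', hv0, hv1, hv0', hv1', hw0, hw1, g0, g1, g0', g1', e0, e1]
    linear_combination core_w0 (Real.cos (2*π*((k.val:ℝ)+1)/n)) (Real.sin (2*π*((k.val:ℝ)+1)/n))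
      (Real.cos (2*π*(m:ℝ)/n)) (Real.sin (2*π*(m:ℝ)/n)) (Real.cos (π*((k.val:ℝ)+1)))
      (Real.cos (π*(m:ℝ))) (Real.sin (π*(m:ℝ)/n)) hCS hcs hd hdne
  · unfold Et dnj
    rw [hJ0 k, hJ1 k, hJ0 (k + (m : Fin n)), hJ1 (k + (m : Fin n)),
      hJ0 (k + ((n - m : ℕ) : Fin n)), hJ1 (k + ((n - m : ℕ) : Fin n)),
      hsq, hsq', hsf, hsf', hv0, hv1, hv0', hv1', hw0, hw1, g0, g1, g0', g1', e0, e1]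
    linear_combination core_w1 (Real.cos (2*π*((k.val:ℝ)+1)/n)) (Real.sin (2*π*((k.val:ℝ)+1)/n))
      (Real.cos (2*π*(m:ℝ)/n)) (Real.sin (2*π*(m:ℝ)/n)) (Real.cos (π*((k.val:ℝ)+1)))
      (Real.cos (π*(m:ℝ))) (Real.sin (π*(m:ℝ)/n)) hCS hcs hd hdne

lemma eig_v (hn4 : 4 ≤ n) (heven : 2 ∣ n) (k : Fin n) (α : Fin 2) :
    ∑ j : Fin n, Et n (ngon n) (vvec n (n/2)) α k j
      = (Pl n (n/2) - 3 * Ql n (n/2)) * vvec n (n/2) (k, α) := by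
  have hn : n ≠ 0 := by omega
  rw [PQ_v hn heven, Finset.sum_mul]
  exact eig_glue hn k _ _ (Et_diag _ _ _ _)
    (fun m h1 h2 => pair_v hn4 heven k α m h1 h2)

lemma eig_w (hn4 : 4 ≤ n) (heven : 2 ∣ n) (k : Fin n) (α : Fin 2) :
    ∑ j : Fin n, Et n (ngon n) ((Jmat n).mulVec (vvec n (n/2))) α k j
      = (Pl n (n/2) + 3 * Ql n (n/2)) * ((Jmat n).mulVec (vvec n (n/2)) (k, α)) := by
  have hn : n ≠ 0 := by omega
  rw [PQ_w hn heven, Finset.sum_mul]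
  exact eig_glue hn k _ _ (Et_diag _ _ _ _)
    (fun m h1 h2 => pair_w hn4 heven k α m h1 h2)

end Main
end NG

/-- for even `n`, `w(n/2) = 0` and `v(n/2)`, `𝕁ₙ v(n/2)` are eigenvectors
of `D²U(a)` with eigenvalues `P_{n/2} - 3Q_{n/2}` and `P_{n/2} + 3Q_{n/2}`. -/


theorem ngon_hessian_half_eigenvectors (n : ℕ) (hn : 4 ≤ n) (heven : 2 ∣ n) :
    wvec n (n / 2) = 0 ∧
    (phess (pot (fun _ : Fin n => (1:ℝ))) (ngon n)).mulVec (vvec n (n / 2))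
      = (Pl n (n / 2) - 3 * Ql n (n / 2)) • vvec n (n / 2) ∧
    (phess (pot (fun _ : Fin n => (1:ℝ))) (ngon n)).mulVec ((Jmat n).mulVec (vvec n (n / 2)))
      = (Pl n (n / 2) + 3 * Ql n (n / 2)) • (Jmat n).mulVec (vvec n (n / 2)) := by
  have hn0 : n ≠ 0 := by omega
  haveI : NeZero n := ⟨hn0⟩
  have ha := NG.ha_ngon (n := n) hn0
  refine ⟨NG.wvec_zero hn0 heven, ?_, ?_⟩
  · funext p
    obtain ⟨k, α⟩ := p
    show ∑ q : Fin n × Fin 2, phess (pot (fun _ : Fin n => (1:ℝ))) (ngon n) (k,α) q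
        * vvec n (n/2) q = _
    rw [Finset.sum_congr rfl (fun q _ => by rw [NG.phess_pot_eq ha (k,α) q]),
      NG.hess2_mulVec (n := n) (ngon n) (vvec n (n/2)) (k,α),
      NG.eig_v hn heven k α]
    simp [smul_eq_mul]
  · funext p
    obtain ⟨k, α⟩ := p
    show ∑ q : Fin n × Fin 2, phess (pot (fun _ : Fin n => (1:ℝ))) (ngon n) (k,α) q
        * (Jmat n).mulVec (vvec n (n/2)) q = _
    rw [Finset.sum_congr rfl (fun q _ => by rw [NG.phess_pot_eq ha (k,α) q]),
      NG.hess2_mulVec (n := n) (ngon n) ((Jmat n).mulVec (vvec n (n/2))) (k,α),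
      NG.eig_w hn heven k α]
    simp [smul_eq_mul]
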